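/- Let H be a real Hilbert space, p ∈ (1, 2), u ∈ H with u ≠ 0, ξ ∈ H, and Φ : H → H a bounded self-adjoint linear operator. Then the inequality ‖v‖^p ≥ ‖u‖^p + ⟨ξ, v − u⟩ + ⟨Φ(v), v⟩ − ⟨Φ(u), u⟩ holds for all v ∈ H if and only if Φ is negative semidefinite (⟨Φ(v), v⟩ ≤ 0 for all v ∈ H) and ξ = p ‖u‖^{p−2} u − 2 Φ(u). (Dilinear subdifferential of the p-th power of the Hilbert norm.) -/

import Mathlib

open Filter Topology Real

-- tangent line inequality for t ^ q, q ≥ 1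
private lemma rpow_tangent_aux {a b q : ℝ} (ha : 0 < a) (hb : 0 ≤ b) (hq : 1 ≤ q) :
    a ^ q + q * a ^ (q - 1) * (b - a) ≤ b ^ q := by
  have hx : (-1 : ℝ) ≤ b / a - 1 := by
    have h0 : 0 ≤ b / a := div_nonneg hb ha.le
    linarith
  have hber := one_add_mul_self_le_rpow_one_add hx hq
  have h1 : (1:ℝ) + (b / a - 1) = b / a := by ring
  rw [h1] at hber
  have hapos : (0:ℝ) < a ^ q := rpow_pos_of_pos ha q
  have hmul := mul_le_mul_of_nonneg_left hber hapos.le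
  have h2 : a * (b / a) = b := by field_simp
  have hdr : a ^ q * (b / a) ^ q = b ^ q := by
    rw [← Real.mul_rpow ha.le (div_nonneg hb ha.le), h2]
  rw [hdr] at hmul
  refine le_trans (le_of_eq ?_) hmul
  rw [Real.rpow_sub_one ha.ne']
  field_simp

private lemma dsg_rev_aux
    {H : Type*} [NormedAddCommGroup H] [InnerProductSpace ℝ H] [CompleteSpace H]
    (p : ℝ) (hp1 : 1 < p) (hp2 : p < 2)
    (u : H) (hu : u ≠ 0) (Φ : H →L[ℝ] H)
    (hΦsa : ∀ x y : H, (inner ℝ (Φ x) y : ℝ) = inner ℝ x (Φ y))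
    (hneg : ∀ v : H, (inner ℝ (Φ v) v : ℝ) ≤ 0) (v : H) :
    ‖u‖ ^ p + ((inner ℝ ((p * ‖u‖ ^ (p - 2)) • u - (2 : ℝ) • Φ u) (v - u) : ℝ) +
        ((inner ℝ (Φ v) v : ℝ) - (inner ℝ (Φ u) u : ℝ))) ≤ ‖v‖ ^ p := by
  have hsym : ∀ x y : H, (inner ℝ (Φ x) y : ℝ) = inner ℝ (Φ y) x := fun x y => by
    rw [hΦsa x y, real_inner_comm]
  have hnu : (0:ℝ) < ‖u‖ := norm_pos_iff.mpr hu
  have hcross : (inner ℝ (Φ v) v : ℝ) - inner ℝ (Φ u) u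
      = inner ℝ (Φ (v - u)) (v - u) + 2 * inner ℝ (Φ u) (v - u) := by
    simp only [map_sub, inner_sub_left, inner_sub_right, hsym v u]
    ring
  have hxi : (inner ℝ ((p * ‖u‖ ^ (p - 2)) • u - (2 : ℝ) • Φ u) (v - u) : ℝ)
      = p * ‖u‖ ^ (p - 2) * inner ℝ u (v - u) - 2 * inner ℝ (Φ u) (v - u) := by
    simp only [inner_sub_left, real_inner_smul_left]
  rw [hcross, hxi]
  have h1 : (inner ℝ (Φ (v - u)) (v - u) : ℝ) ≤ 0 := hneg _
  have h2 : (inner ℝ u (v - u) : ℝ) ≤ ‖u‖ * ‖v‖ - ‖u‖ ^ 2 := by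
    rw [inner_sub_right, real_inner_self_eq_norm_sq]
    have := real_inner_le_norm u v
    linarith
  have hc : (0:ℝ) < p * ‖u‖ ^ (p - 2) := by
    exact mul_pos (by linarith) (rpow_pos_of_pos hnu _)
  have h3 : p * ‖u‖ ^ (p - 2) * inner ℝ u (v - u) ≤ p * ‖u‖ ^ (p - 1) * (‖v‖ - ‖u‖) := by
    have := mul_le_mul_of_nonneg_left h2 hc.le
    refine le_trans this (le_of_eq ?_)
    have e1 : ‖u‖ ^ (p - 1) = ‖u‖ ^ (p - 2) * ‖u‖ := by
      rw [show p - 1 = (p - 2) + 1 by ring, Real.rpow_add_one hnu.ne']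
    rw [e1]
    have e2 : (‖u‖:ℝ) ^ 2 = ‖u‖ * ‖u‖ := sq ‖u‖ ▸ by ring
    rw [e2]; ring
  have htan := rpow_tangent_aux hnu (norm_nonneg v) hp1.le
  linarith

private lemma dsg_neg_aux
    {H : Type*} [NormedAddCommGroup H] [InnerProductSpace ℝ H] [CompleteSpace H]
    (p : ℝ) (hp1 : 1 < p) (hp2 : p < 2)
    (u : H) (hu : u ≠ 0) (ξ : H) (Φ : H →L[ℝ] H)
    (hΦsa : ∀ x y : H, (inner ℝ (Φ x) y : ℝ) = inner ℝ x (Φ y))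
    (h : ∀ v : H, ‖u‖ ^ p + ((inner ℝ ξ (v - u) : ℝ) +
        ((inner ℝ (Φ v) v : ℝ) - (inner ℝ (Φ u) u : ℝ))) ≤ ‖v‖ ^ p)
    (w : H) : (inner ℝ (Φ w) w : ℝ) ≤ 0 := by
  set C : ℝ := (inner ℝ ξ u : ℝ) + (inner ℝ (Φ u) u : ℝ) - ‖u‖ ^ p with hC
  set D : ℝ := (inner ℝ ξ w : ℝ) with hD
  have key : ∀ t : ℝ, 1 ≤ t → (inner ℝ (Φ w) w : ℝ) ≤
      t ^ (p - 2) * ‖w‖ ^ p + C / t ^ 2 - D / t := by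
    intro t ht
    have ht0 : (0:ℝ) < t := lt_of_lt_of_le one_pos ht
    have hv := h (t • w)
    have hn : ‖t • w‖ ^ p = t ^ p * ‖w‖ ^ p := by
      rw [norm_smul, Real.mul_rpow (norm_nonneg _) (norm_nonneg w), Real.norm_eq_abs,
        abs_of_pos ht0]
    have hq : (inner ℝ (Φ (t • w)) (t • w) : ℝ) = t ^ 2 * inner ℝ (Φ w) w := by
      rw [map_smul]
      simp only [real_inner_smul_left, inner_smul_right, smul_eq_mul]
      ring
    have hxi : (inner ℝ ξ (t • w - u) : ℝ) = t * D - inner ℝ ξ u := by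
      rw [inner_sub_right, inner_smul_right]
    rw [hn, hq, hxi] at hv
    -- hv : ‖u‖^p + (t*D - ⟪ξ,u⟫ + (t^2 * B - ⟪Φu,u⟫)) ≤ t^p * ‖w‖^p
    have hp2' : t ^ (p - 2) = t ^ p / t ^ 2 := by
      rw [show ((2:ℝ)) = ((2:ℕ):ℝ) by norm_num, ← Real.rpow_natCast t 2,
        ← Real.rpow_sub ht0]
    have hgoal : (inner ℝ (Φ w) w : ℝ) ≤ (t ^ p * ‖w‖ ^ p + C - D * t) / t ^ 2 := by
      rw [le_div_iff₀ (by positivity)]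
      linarith [hv]
    refine le_trans hgoal (le_of_eq ?_)
    rw [hp2']
    field_simp
  have lim : Tendsto (fun t : ℝ => t ^ (p - 2) * ‖w‖ ^ p + C / t ^ 2 - D / t)
      atTop (𝓝 0) := by
    have l1 : Tendsto (fun t : ℝ => t ^ (p - 2)) atTop (𝓝 0) := by
      have := tendsto_rpow_neg_atTop (show (0:ℝ) < 2 - p by linarith)
      simpa [neg_sub] using this
    have l2 : Tendsto (fun t : ℝ => C / t ^ 2) atTop (𝓝 0) :=
      tendsto_const_nhds.div_atTop (tendsto_pow_atTop two_ne_zero)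
    have l3 : Tendsto (fun t : ℝ => D / t) atTop (𝓝 0) :=
      tendsto_const_nhds.div_atTop tendsto_id
    have := ((l1.mul_const (‖w‖ ^ p)).add l2).sub l3
    simpa using this
  exact ge_of_tendsto lim (eventually_atTop.mpr ⟨1, key⟩)

private lemma dsg_xi_aux
    {H : Type*} [NormedAddCommGroup H] [InnerProductSpace ℝ H] [CompleteSpace H]
    (p : ℝ) (hp1 : 1 < p) (hp2 : p < 2)
    (u : H) (hu : u ≠ 0) (ξ : H) (Φ : H →L[ℝ] H)
    (hΦsa : ∀ x y : H, (inner ℝ (Φ x) y : ℝ) = inner ℝ x (Φ y))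
    (h : ∀ v : H, ‖u‖ ^ p + ((inner ℝ ξ (v - u) : ℝ) +
        ((inner ℝ (Φ v) v : ℝ) - (inner ℝ (Φ u) u : ℝ))) ≤ ‖v‖ ^ p) :
    ξ = (p * ‖u‖ ^ (p - 2)) • u - (2 : ℝ) • Φ u := by
  have hnu : (0:ℝ) < ‖u‖ := norm_pos_iff.mpr hu
  have hsym : ∀ x y : H, (inner ℝ (Φ x) y : ℝ) = inner ℝ (Φ y) x := fun x y => by
    rw [hΦsa x y, real_inner_comm]
  -- main step: for every w, ⟪ξ + 2 Φ u, w⟫ = p ‖u‖^(p-2) ⟪u, w⟫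
  have main : ∀ w : H, (inner ℝ ξ w : ℝ) + 2 * inner ℝ (Φ u) w
      = p * ‖u‖ ^ (p - 2) * inner ℝ u w := by
    intro w
    set A : ℝ := (inner ℝ ξ w : ℝ) + 2 * inner ℝ (Φ u) w with hA
    set B : ℝ := (inner ℝ (Φ w) w : ℝ) with hB
    set Dv : ℝ := p * ‖u‖ ^ (p - 2) * inner ℝ u w with hDv
    set φ : ℝ → ℝ := fun t => (‖u‖ ^ 2 + 2 * inner ℝ u w * t + ‖w‖ ^ 2 * t ^ 2) ^ (p / 2)
      with hφ
    -- φ t = ‖u + t • w‖ ^ p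
    have hφeq : ∀ t : ℝ, φ t = ‖u + t • w‖ ^ p := by
      intro t
      have h1 : ‖u‖ ^ 2 + 2 * (inner ℝ u w : ℝ) * t + ‖w‖ ^ 2 * t ^ 2
          = (inner ℝ (u + t • w) (u + t • w) : ℝ) := by
        simp only [inner_add_left, inner_add_right, real_inner_smul_left, inner_smul_right,
          real_inner_self_eq_norm_sq, real_inner_comm w u]
        ring
      have h2 : (inner ℝ (u + t • w) (u + t • w) : ℝ) = ‖u + t • w‖ ^ 2 :=
        real_inner_self_eq_norm_sq _
      rw [hφ]
      simp only
      rw [h1, h2, ← Real.rpow_natCast ‖u + t • w‖ 2, ← Real.rpow_mul (norm_nonneg _)]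
      norm_num
      rw [show (2:ℝ) * (p / 2) = p by ring]
    -- φ has derivative Dv at 0
    have hder : HasDerivAt φ Dv 0 := by
      have hq : HasDerivAt (fun t : ℝ => ‖u‖ ^ 2 + 2 * (inner ℝ u w : ℝ) * t + ‖w‖ ^ 2 * t ^ 2)
          (2 * inner ℝ u w) 0 := by
        have := (((hasDerivAt_id (0:ℝ)).const_mul (2 * (inner ℝ u w : ℝ))).const_add (‖u‖ ^ 2)).add
          (((hasDerivAt_pow 2 (0:ℝ))).const_mul (‖w‖ ^ 2))
        simpa [Pi.add_def] using this
      have hne : ‖u‖ ^ 2 + 2 * (inner ℝ u w : ℝ) * 0 + ‖w‖ ^ 2 * 0 ^ 2 ≠ 0 := by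
        have e : ‖u‖ ^ 2 + 2 * (inner ℝ u w : ℝ) * 0 + ‖w‖ ^ 2 * 0 ^ 2 = ‖u‖ ^ 2 := by ring
        rw [e]
        positivity
      have := hq.rpow_const (p := p / 2) (Or.inl hne)
      convert this using 1
      have e0 : ‖u‖ ^ 2 + 2 * (inner ℝ u w : ℝ) * 0 + ‖w‖ ^ 2 * 0 ^ 2 = ‖u‖ ^ 2 := by ring
      rw [e0]
      have e1 : ((‖u‖:ℝ) ^ 2) ^ (p / 2 - 1) = ‖u‖ ^ (p - 2) := by
        rw [← Real.rpow_natCast ‖u‖ 2, ← Real.rpow_mul (norm_nonneg _)]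
        norm_num
        ring_nf
      rw [e1, hDv]
      ring
    -- inequality: φ t - φ 0 ≥ t * A + t^2 * B
    have hineq : ∀ t : ℝ, φ 0 + (t * A + t ^ 2 * B) ≤ φ t := by
      intro t
      have hv := h (u + t • w)
      have e1 : (inner ℝ ξ (u + t • w - u) : ℝ) = t * inner ℝ ξ w := by
        rw [add_sub_cancel_left, inner_smul_right]
      have e2 : (inner ℝ (Φ (u + t • w)) (u + t • w) : ℝ)
          = inner ℝ (Φ u) u + 2 * t * inner ℝ (Φ u) w + t ^ 2 * inner ℝ (Φ w) w := by
        rw [map_add, map_smul]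
        simp only [inner_add_left, inner_add_right, real_inner_smul_left, inner_smul_right,
          smul_eq_mul, ContinuousLinearMap.coe_smul', Pi.smul_apply]
        rw [hsym w u]
        ring
      rw [e1, e2] at hv
      have e3 : φ 0 = ‖u‖ ^ p := by
        rw [hφeq 0]; simp
      rw [hφeq t, e3]
      rw [hA, hB]
      linarith [hv]
    -- slopes converge
    have hslope : Tendsto (slope φ 0) (𝓝[≠] 0) (𝓝 Dv) :=
      hasDerivAt_iff_tendsto_slope.mp hder
    have hsl : ∀ t : ℝ, slope φ 0 t = (φ t - φ 0) / t := by
      intro t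
      rw [slope_def_field, sub_zero]
    -- from the right: A ≤ Dv
    have hright : A ≤ Dv := by
      have h1 : Tendsto (slope φ 0) (𝓝[>] 0) (𝓝 Dv) :=
        hslope.mono_left (nhdsWithin_mono 0 fun t ht => ne_of_gt ht)
      have h2 : Tendsto (fun t : ℝ => A + t * B) (𝓝[>] 0) (𝓝 A) := by
        have : Tendsto (fun t : ℝ => A + t * B) (𝓝 0) (𝓝 (A + 0 * B)) := by
          exact (tendsto_id.mul_const B).const_add A
        simpa using this.mono_left nhdsWithin_le_nhds
      refine le_of_tendsto_of_tendsto h2 h1 (eventually_mem_nhdsWithin.mono fun t ht => ?_)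
      have ht0 : (0:ℝ) < t := ht
      have hts : (A + t * B) * t ≤ φ t - φ 0 := by nlinarith [hineq t]
      show A + t * B ≤ slope φ 0 t
      rw [hsl t, le_div_iff₀ ht0]
      exact hts
    -- from the left: Dv ≤ A
    have hleft : Dv ≤ A := by
      have h1 : Tendsto (slope φ 0) (𝓝[<] 0) (𝓝 Dv) :=
        hslope.mono_left (nhdsWithin_mono 0 fun t ht => ne_of_lt ht)
      have h2 : Tendsto (fun t : ℝ => A + t * B) (𝓝[<] 0) (𝓝 A) := by
        have : Tendsto (fun t : ℝ => A + t * B) (𝓝 0) (𝓝 (A + 0 * B)) := by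
          exact (tendsto_id.mul_const B).const_add A
        simpa using this.mono_left nhdsWithin_le_nhds
      refine le_of_tendsto_of_tendsto h1 h2 (eventually_mem_nhdsWithin.mono fun t ht => ?_)
      have ht0 : t < 0 := ht
      have hts : (A + t * B) * t ≤ φ t - φ 0 := by nlinarith [hineq t]
      show slope φ 0 t ≤ A + t * B
      rw [hsl t, div_le_iff_of_neg ht0]
      exact hts
    have : A = Dv := le_antisymm hright hleft
    rw [hA, hDv] at this
    linarith [this]
  -- conclude vector identity
  have hzero : ξ - ((p * ‖u‖ ^ (p - 2)) • u - (2 : ℝ) • Φ u) = 0 := by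
    rw [← inner_self_eq_zero (𝕜 := ℝ)]
    set z := ξ - ((p * ‖u‖ ^ (p - 2)) • u - (2 : ℝ) • Φ u) with hz
    have hm := main z
    have expand : (inner ℝ z z : ℝ)
        = inner ℝ ξ z + 2 * inner ℝ (Φ u) z - p * ‖u‖ ^ (p - 2) * inner ℝ u z := by
      rw [hz]
      simp only [inner_sub_left, real_inner_smul_left]
      ring
    rw [expand]
    linarith [hm]
  have := sub_eq_zero.mp hzero
  exact this


/-- **Dilinear subdifferential of the `p`-th power of the Hilbert norm, `1 < p < 2`.**
Let `H` be a real Hilbert space, `p ∈ (1, 2)`, `u ≠ 0`, `ξ ∈ H`, and `Φ` a bounded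
self-adjoint operator.  Then `‖v‖^p ≥ ‖u‖^p + ⟨ξ, v − u⟩ + ⟨Φ v, v⟩ − ⟨Φ u, u⟩` for
all `v` if and only if `Φ` is negative semidefinite and `ξ = p ‖u‖^{p−2} u − 2 Φ u`. -/
theorem dilinear_subgradient_pow_norm_iff
    {H : Type*} [NormedAddCommGroup H] [InnerProductSpace ℝ H] [CompleteSpace H]
    (p : ℝ) (hp1 : 1 < p) (hp2 : p < 2)
    (u : H) (hu : u ≠ 0) (ξ : H) (Φ : H →L[ℝ] H)
    (hΦsa : ∀ x y : H, (inner ℝ (Φ x) y : ℝ) = inner ℝ x (Φ y)) :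
    (∀ v : H, ‖u‖ ^ p + ((inner ℝ ξ (v - u) : ℝ) +
        ((inner ℝ (Φ v) v : ℝ) - (inner ℝ (Φ u) u : ℝ))) ≤ ‖v‖ ^ p) ↔
    ((∀ v : H, (inner ℝ (Φ v) v : ℝ) ≤ 0) ∧
      ξ = (p * ‖u‖ ^ (p - 2)) • u - (2 : ℝ) • Φ u) := by
  constructor
  · intro h
    exact ⟨fun w => dsg_neg_aux p hp1 hp2 u hu ξ Φ hΦsa h w,
      dsg_xi_aux p hp1 hp2 u hu ξ Φ hΦsa h⟩
  · rintro ⟨hneg, rfl⟩ v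
    exact dsg_rev_aux p hp1 hp2 u hu Φ hΦsa hneg v
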